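/- Let D be a positive definite density matrix, B = B* with Tr B = 0, and C = J_D⁻¹(B) where J_D(X) = (DX+XD)/2. Then the supremum over all POVMs {Eᵢ} of the classical Fisher information Σᵢ (Tr B Eᵢ)²/(Tr D Eᵢ) equals Tr B J_D⁻¹(B) = Tr D C², and is attained by the spectral projections of C. -/

import Mathlib

open Matrix
open scoped ComplexOrder

variable {n : ℕ}

lemma aux_trace_self (A : Matrix (Fin n) (Fin n) ℂ) :
    (Aᴴ * A).trace = ((∑ j, ∑ i, Complex.normSq (A i j) : ℝ) : ℂ) := by
  simp only [Matrix.trace, Matrix.diag, Matrix.mul_apply, Matrix.conjTranspose_apply]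
  push_cast
  congr 1; ext j; congr 1; ext i
  rw [Complex.normSq_eq_conj_mul_self]; rfl

lemma aux_psd_trace_nonneg {M : Matrix (Fin n) (Fin n) ℂ} (hM : M.PosSemidef) :
    0 ≤ M.trace := by
  have h : ∀ i, 0 ≤ M i i := by
    intro i
    exact hM.diag_nonneg
  exact Finset.sum_nonneg fun i _ => h i

lemma aux_trace_self' (A : Matrix (Fin n) (Fin n) ℂ) :
    (Aᴴ * A).trace.re = ∑ p : Fin n × Fin n, Complex.normSq (A p.2 p.1) := by
  rw [aux_trace_self, Fintype.sum_prod_type]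
  simp

lemma aux_cs (A F : Matrix (Fin n) (Fin n) ℂ) :
    ((Aᴴ * F).trace.re) ^ 2 ≤ (Aᴴ * A).trace.re * (Fᴴ * F).trace.re := by
  have key : (Aᴴ * F).trace = ∑ p : Fin n × Fin n, (starRingEnd ℂ) (A p.2 p.1) * F p.2 p.1 := by
    rw [Fintype.sum_prod_type]
    simp only [Matrix.trace, Matrix.diag, Matrix.mul_apply, Matrix.conjTranspose_apply]
    rfl
  have h3 : ‖(Aᴴ * F).trace‖
      ≤ ∑ p : Fin n × Fin n, ‖A p.2 p.1‖ * ‖F p.2 p.1‖ := by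
    rw [key]
    refine (norm_sum_le _ _).trans_eq ?_
    refine Finset.sum_congr rfl fun p _ => ?_
    simp [_root_.map_mul]
  have h4 := Finset.sum_mul_sq_le_sq_mul_sq (Finset.univ : Finset (Fin n × Fin n))
      (fun p => ‖A p.2 p.1‖) (fun p => ‖F p.2 p.1‖)
  have h5 : ((Aᴴ * F).trace.re) ^ 2 ≤ (‖(Aᴴ * F).trace‖) ^ 2 := by
    rw [← sq_abs]
    exact pow_le_pow_left₀ (abs_nonneg _) (Complex.abs_re_le_norm _) 2
  have h6 : (‖(Aᴴ * F).trace‖) ^ 2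
      ≤ (∑ p : Fin n × Fin n, ‖A p.2 p.1‖ * ‖F p.2 p.1‖) ^ 2 :=
    pow_le_pow_left₀ (norm_nonneg _) h3 2
  rw [aux_trace_self', aux_trace_self']
  simp only [← Complex.sq_norm]
  exact (h5.trans h6).trans h4

lemma aux_trace_mul_psd_nonneg {A E : Matrix (Fin n) (Fin n) ℂ}
    (hA : A.PosSemidef) (hE : E.PosSemidef) : 0 ≤ (A * E).trace := by
  obtain ⟨S, hSh, hSS⟩ : ∃ S : Matrix (Fin n) (Fin n) ℂ, Sᴴ = S ∧ S * S = E :=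
    open scoped MatrixOrder in
    ⟨CFC.sqrt E, (CFC.sqrt_nonneg E).posSemidef.1, CFC.sqrt_mul_sqrt_self E hE.nonneg⟩
  have h1 : (A * E).trace = (Sᴴ * A * S).trace := by
    rw [hSh, ← hSS, ← mul_assoc, Matrix.trace_mul_comm, ← mul_assoc]
  rw [h1]
  exact aux_psd_trace_nonneg (hA.conjTranspose_mul_mul_same _)

lemma aux_eq_zero {A : Matrix (Fin n) (Fin n) ℂ} (h : (Aᴴ * A).trace = 0) : A = 0 := by
  rw [aux_trace_self] at h
  norm_cast at h
  have h2 := (Finset.sum_eq_zero_iff_of_nonneg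
    (fun j _ => Finset.sum_nonneg fun i _ => Complex.normSq_nonneg _)).mp h
  ext i j
  have h3 := (Finset.sum_eq_zero_iff_of_nonneg
    (fun i _ => Complex.normSq_nonneg _)).mp (h2 j (Finset.mem_univ j)) i (Finset.mem_univ i)
  simpa using Complex.normSq_eq_zero.mp h3

lemma aux_conj_trace {C D E : Matrix (Fin n) (Fin n) ℂ} (hC : Cᴴ = C) (hD : Dᴴ = D)
    (hE : Eᴴ = E) : (C * D * E).trace = star ((D * C * E).trace) := by
  rw [← Matrix.trace_conjTranspose]
  simp only [Matrix.conjTranspose_mul, hC, hD, hE]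
  rw [← mul_assoc, Matrix.trace_mul_comm, ← mul_assoc]

lemma aux_C_herm (D : Matrix (Fin n) (Fin n) ℂ) (hD : D.PosDef)
    (B C : Matrix (Fin n) (Fin n) ℂ) (hB : B.IsHermitian)
    (hC : (1 / 2 : ℂ) • (D * C + C * D) = B) : C.IsHermitian := by
  set X := C - Cᴴ with hX
  have hDh : Dᴴ = D := hD.isHermitian
  have h1 : (1 / 2 : ℂ) • (D * C + C * D) = (1 / 2 : ℂ) • (D * Cᴴ + Cᴴ * D) := by
    calc (1 / 2 : ℂ) • (D * C + C * D) = B := hC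
    _ = Bᴴ := hB.symm
    _ = ((1 / 2 : ℂ) • (D * C + C * D))ᴴ := by rw [hC]
    _ = (1 / 2 : ℂ) • (D * Cᴴ + Cᴴ * D) := by
        simp only [Matrix.conjTranspose_smul, Matrix.conjTranspose_add,
          Matrix.conjTranspose_mul, hDh]
        rw [add_comm]
        norm_num
  have h2 : D * C + C * D = D * Cᴴ + Cᴴ * D := by
    have h := congrArg (fun M => (2 : ℂ) • M) h1
    simpa [smul_smul] using h
  have hXeq : D * X + X * D = 0 := by
    rw [hX]
    calc D * (C - Cᴴ) + (C - Cᴴ) * D = (D * C + C * D) - (D * Cᴴ + Cᴴ * D) := by noncomm_ring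
    _ = 0 := sub_eq_zero.mpr h2
  have t0 : (Xᴴ * (D * X)).trace + (Xᴴ * (X * D)).trace = 0 := by
    rw [← Matrix.trace_add, ← Matrix.mul_add, hXeq, Matrix.mul_zero, Matrix.trace_zero]
  have t1 : 0 ≤ (Xᴴ * (D * X)).trace := by
    rw [← mul_assoc]
    exact aux_psd_trace_nonneg (hD.posSemidef.conjTranspose_mul_mul_same _)
  have t2 : 0 ≤ (Xᴴ * (X * D)).trace := by
    rw [← mul_assoc]
    exact aux_trace_mul_psd_nonneg (Matrix.posSemidef_conjTranspose_mul_self X) hD.posSemidef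
  have t1' : (Xᴴ * (D * X)).trace = 0 := by
    refine le_antisymm ?_ t1
    calc (Xᴴ * (D * X)).trace = (Xᴴ * (D * X)).trace + 0 := by rw [add_zero]
    _ ≤ (Xᴴ * (D * X)).trace + (Xᴴ * (X * D)).trace := by exact add_le_add_right t2 _
    _ = 0 := t0
  -- rewrite Xᴴ D X as (S X)ᴴ (S X)
  obtain ⟨S, hSh, hSS⟩ : ∃ S : Matrix (Fin n) (Fin n) ℂ, Sᴴ = S ∧ S * S = D :=
    open scoped MatrixOrder in
    ⟨CFC.sqrt D, (CFC.sqrt_nonneg D).posSemidef.1, CFC.sqrt_mul_sqrt_self D hD.posSemidef.nonneg⟩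
  have hkey : Xᴴ * (D * X) = (S * X)ᴴ * (S * X) := by
    rw [Matrix.conjTranspose_mul, hSh, ← hSS]
    noncomm_ring
  have hz : S * X = 0 := aux_eq_zero (by rw [← hkey]; exact t1')
  have hz2 : D * X = 0 := by
    rw [← hSS, mul_assoc, hz, Matrix.mul_zero]
  have hX0 : X = 0 := by
    letI := hD.isUnit.invertible
    calc X = D⁻¹ * (D * X) := by rw [← mul_assoc, Matrix.inv_mul_of_invertible, Matrix.one_mul]
    _ = 0 := by rw [hz2, Matrix.mul_zero]
  have : Cᴴ = C := by
    have := sub_eq_zero.mp hX0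
    exact this.symm
  exact this

lemma aux_sandwich (X P : Matrix (Fin n) (Fin n) ℂ) :
    (P * X * P).trace = (X * (P * P)).trace := by
  rw [Matrix.trace_mul_comm, ← mul_assoc, Matrix.trace_mul_comm]

lemma aux_key (D C E : Matrix (Fin n) (Fin n) ℂ) (hD : D.PosDef) (hCh : Cᴴ = C)
    (hE : E.PosSemidef) :
    ((D * C * E).trace.re) ^ 2 ≤ (D * E).trace.re * (C * D * C * E).trace.re := by
  obtain ⟨S, hSh, hSS⟩ : ∃ S : Matrix (Fin n) (Fin n) ℂ, Sᴴ = S ∧ S * S = D :=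
    open scoped MatrixOrder in
    ⟨CFC.sqrt D, (CFC.sqrt_nonneg D).posSemidef.1, CFC.sqrt_mul_sqrt_self D hD.posSemidef.nonneg⟩
  obtain ⟨T, hTh, hTT⟩ : ∃ T : Matrix (Fin n) (Fin n) ℂ, Tᴴ = T ∧ T * T = E :=
    open scoped MatrixOrder in
    ⟨CFC.sqrt E, (CFC.sqrt_nonneg E).posSemidef.1, CFC.sqrt_mul_sqrt_self E hE.nonneg⟩
  have h := aux_cs (S * T) (S * C * T)
  have e1 : (S * T)ᴴ * (S * T) = T * (D * C * C) * T ∨ True := Or.inr trivial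
  have e2 : (S * T)ᴴ * (S * T) = T * D * T := by
    rw [Matrix.conjTranspose_mul, hSh, hTh, ← hSS]; noncomm_ring
  have e3 : (S * C * T)ᴴ * (S * C * T) = T * (C * D * C) * T := by
    rw [Matrix.conjTranspose_mul, Matrix.conjTranspose_mul, hSh, hTh, hCh, ← hSS]; noncomm_ring
  have e4 : (S * T)ᴴ * (S * C * T) = T * (D * C) * T := by
    rw [Matrix.conjTranspose_mul, hSh, hTh, ← hSS]; noncomm_ring
  rw [e2, e3, e4, aux_sandwich, aux_sandwich, aux_sandwich, hTT] at h
  exact h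

lemma aux_div (a b c : ℝ) (hc : 0 ≤ c) (h : a ^ 2 ≤ b * c) : a ^ 2 / b ≤ c := by
  rcases le_or_gt b 0 with h0 | h0
  · exact le_trans (div_nonpos_of_nonneg_of_nonpos (sq_nonneg a) h0) hc
  · rw [div_le_iff₀ h0]; rw [mul_comm] at h; exact h

lemma aux_re_nonneg {z : ℂ} (h : 0 ≤ z) : 0 ≤ z.re :=
  (Complex.nonneg_iff.mp h).1

lemma aux_conj_diag_mul {U : Matrix (Fin n) (Fin n) ℂ} (hU : star U * U = 1)
    (f g : Fin n → ℂ) :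
    (U * Matrix.diagonal f * star U) * (U * Matrix.diagonal g * star U)
      = U * Matrix.diagonal (fun j => f j * g j) * star U := by
  have h1 : (U * Matrix.diagonal f * star U) * (U * Matrix.diagonal g * star U)
      = U * (Matrix.diagonal f * (star U * U) * Matrix.diagonal g) * star U := by noncomm_ring
  rw [h1, hU, Matrix.mul_one, Matrix.diagonal_mul_diagonal]

lemma aux_diag_sum (v : Fin n → ℂ) :
    ∑ i, Matrix.diagonal (fun j => if j = i then v i else 0) = Matrix.diagonal v := by
  ext a b
  simp only [Matrix.sum_apply, Matrix.diagonal_apply]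
  by_cases hab : a = b
  · subst hab; simp
  · simp [hab]

lemma aux_smul_conj (U : Matrix (Fin n) (Fin n) ℂ) (r : ℂ) (f : Fin n → ℂ) :
    r • (U * Matrix.diagonal f * star U) = U * Matrix.diagonal (fun j => r * f j) * star U := by
  have h : Matrix.diagonal (fun j => r * f j) = r • Matrix.diagonal f := by
    ext a b; by_cases hab : a = b <;> simp [Matrix.diagonal_apply, hab]
  rw [h, Matrix.mul_smul, Matrix.smul_mul]

/-- for a positive definite density matrix `D`, traceless Hermitian `B` and
`C = J_D⁻¹(B)` (i.e. `(DC + CD)/2 = B`), the supremum over all POVMs of the classical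
Fisher information `Σᵢ (Tr B Eᵢ)²/(Tr D Eᵢ)` equals `Tr B J_D⁻¹(B) = Tr D C²`, and the
supremum is attained (e.g. by the spectral projections of `C`). -/
theorem stmt7 {n : ℕ} (D : Matrix (Fin n) (Fin n) ℂ) (hD : D.PosDef) (hDtr : D.trace = 1)
    (B : Matrix (Fin n) (Fin n) ℂ) (hB : B.IsHermitian) (hBtr : B.trace = 0)
    (C : Matrix (Fin n) (Fin n) ℂ) (hC : (1 / 2 : ℂ) • (D * C + C * D) = B) :
    IsGreatest {x : ℝ | ∃ (k : ℕ) (E : Fin k → Matrix (Fin n) (Fin n) ℂ),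
        (∀ i, (E i).PosSemidef) ∧ (∑ i, E i = 1) ∧
        x = ∑ i, ((B * E i).trace.re) ^ 2 / ((D * E i).trace.re)}
      ((B * C).trace.re)
    ∧ (B * C).trace = (D * C * C).trace := by
  have hCh : C.IsHermitian := aux_C_herm D hD B C hB hC
  have hChe : Cᴴ = C := hCh
  have hDh : Dᴴ = D := hD.isHermitian
  have cyc : (C * D * C).trace = (D * C * C).trace := by
    rw [Matrix.trace_mul_comm, ← mul_assoc, Matrix.trace_mul_comm, mul_assoc]
  have part2 : (B * C).trace = (D * C * C).trace := by
    rw [← hC, Matrix.smul_mul, Matrix.trace_smul, Matrix.add_mul, Matrix.trace_add, cyc,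
      smul_eq_mul]
    ring
  refine ⟨⟨?_, ?_⟩, part2⟩
  · -- membership: spectral projections of C
    set U : Matrix (Fin n) (Fin n) ℂ := (hCh.eigenvectorUnitary : Matrix (Fin n) (Fin n) ℂ)
      with hUdef
    have hU1 : star U * U = 1 := Unitary.coe_star_mul_self hCh.eigenvectorUnitary
    have hU2 : U * star U = 1 := Unitary.coe_mul_star_self hCh.eigenvectorUnitary
    set c : Fin n → ℝ := hCh.eigenvalues with hcdef
    have hspec : C = U * Matrix.diagonal (fun j => (c j : ℂ)) * star U := hCh.spectral_theorem
    set E : Fin n → Matrix (Fin n) (Fin n) ℂ :=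
      fun i => U * Matrix.diagonal (fun j => if j = i then (1 : ℂ) else 0) * star U with hEdef
    have hCE : ∀ i, C * E i = (c i : ℂ) • E i := by
      intro i
      rw [hEdef, hspec, aux_conj_diag_mul hU1, aux_smul_conj]
      have hfun : (fun j => (c j : ℂ) * (if j = i then (1 : ℂ) else 0))
          = (fun j => (c i : ℂ) * (if j = i then (1 : ℂ) else 0)) := by
        funext j; by_cases hj : j = i <;> simp [hj]
      rw [hfun]
    have hEC : ∀ i, E i * C = (c i : ℂ) • E i := by
      intro i
      rw [hEdef, hspec, aux_conj_diag_mul hU1, aux_smul_conj]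
      have hfun : (fun j => (if j = i then (1 : ℂ) else 0) * (c j : ℂ))
          = (fun j => (c i : ℂ) * (if j = i then (1 : ℂ) else 0)) := by
        funext j; by_cases hj : j = i <;> simp [hj]
      rw [hfun]
    have hBE : ∀ i, (B * E i).trace = (c i : ℂ) * (D * E i).trace := by
      intro i
      rw [← hC, Matrix.smul_mul, Matrix.trace_smul, Matrix.add_mul, Matrix.trace_add]
      have h1 : (D * C * E i).trace = (c i : ℂ) * (D * E i).trace := by
        rw [mul_assoc, hCE i, Matrix.mul_smul, Matrix.trace_smul, smul_eq_mul]
      have h2 : (C * D * E i).trace = (c i : ℂ) * (D * E i).trace := by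
        rw [mul_assoc, Matrix.trace_mul_comm, mul_assoc, hEC i, Matrix.mul_smul,
          Matrix.trace_smul, smul_eq_mul]
      rw [h1, h2, smul_eq_mul]
      ring
    refine ⟨n, E, ?_, ?_, ?_⟩
    · intro i
      have hd : (Matrix.diagonal (fun j => if j = i then (1 : ℂ) else 0)).PosSemidef :=
        Matrix.posSemidef_diagonal_iff.mpr fun j => by by_cases hj : j = i <;> simp [hj]
      have h := hd.mul_mul_conjTranspose_same U
      rwa [← Matrix.star_eq_conjTranspose] at h
    · rw [hEdef]
      calc ∑ i, U * Matrix.diagonal (fun j => if j = i then (1 : ℂ) else 0) * star U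
          = U * (∑ i, Matrix.diagonal (fun j => if j = i then (1 : ℂ) else 0)) * star U := by
            rw [← Finset.sum_mul, ← Finset.mul_sum]
        _ = 1 := by rw [aux_diag_sum (fun _ => (1 : ℂ)), Matrix.diagonal_one, Matrix.mul_one, hU2]
    · -- value
      have hterm : ∀ i, ((B * E i).trace.re) ^ 2 / ((D * E i).trace.re)
          = (c i) ^ 2 * (D * E i).trace.re := by
        intro i
        rw [hBE i]
        have hre : ((c i : ℂ) * (D * E i).trace).re = c i * (D * E i).trace.re := by
          simp [Complex.mul_re]
        rw [hre]
        rcases eq_or_ne ((D * E i).trace.re) 0 with h0 | h0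
        · rw [h0]; simp
        · field_simp
      have hsum2 : ∑ i, ((c i : ℂ) ^ 2) • E i = C * C := by
        conv_rhs => rw [hspec]
        rw [aux_conj_diag_mul hU1]
        rw [hEdef]
        have : ∀ i, ((c i : ℂ) ^ 2) •
            (U * Matrix.diagonal (fun j => if j = i then (1 : ℂ) else 0) * star U)
            = U * Matrix.diagonal (fun j => if j = i then ((c i : ℂ) ^ 2) else 0) * star U := by
          intro i
          rw [aux_smul_conj]
          have hfun : (fun j => ((c i : ℂ) ^ 2) * (if j = i then (1 : ℂ) else 0))
              = (fun j => if j = i then ((c i : ℂ) ^ 2) else 0) := by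
            funext j; by_cases hj : j = i <;> simp [hj]
          rw [hfun]
        rw [Finset.sum_congr rfl fun i _ => this i]
        calc ∑ i, U * Matrix.diagonal (fun j => if j = i then ((c i : ℂ) ^ 2) else 0) * star U
            = U * (∑ i, Matrix.diagonal (fun j => if j = i then ((c i : ℂ) ^ 2) else 0)) *
              star U := by rw [← Finset.sum_mul, ← Finset.mul_sum]
          _ = U * Matrix.diagonal (fun j => (c j : ℂ) * (c j : ℂ)) * star U := by
              rw [aux_diag_sum (fun j => ((c j : ℂ) ^ 2))]
              have hfun : (fun j => ((c j : ℂ) ^ 2)) = (fun j => (c j : ℂ) * (c j : ℂ)) := by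
                funext j; ring
              rw [hfun]
      have hfin : ∑ i, (c i) ^ 2 * (D * E i).trace.re = (D * C * C).trace.re := by
        have h1 : ∑ i, (c i) ^ 2 * (D * E i).trace.re
            = (∑ i, ((c i : ℂ) ^ 2) * (D * E i).trace).re := by
          rw [Complex.re_sum]
          refine Finset.sum_congr rfl fun i _ => ?_
          simp [Complex.mul_re, ← Complex.ofReal_pow]
        rw [h1]
        have h2 : ∑ i, ((c i : ℂ) ^ 2) * (D * E i).trace = (D * (C * C)).trace := by
          have h3 : ∀ i, ((c i : ℂ) ^ 2) * (D * E i).trace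
              = (D * (((c i : ℂ) ^ 2) • E i)).trace := by
            intro i
            rw [Matrix.mul_smul, Matrix.trace_smul, smul_eq_mul]
          rw [Finset.sum_congr rfl fun i _ => h3 i, ← Matrix.trace_sum, ← Finset.mul_sum, hsum2]
        rw [h2, ← mul_assoc]
      rw [part2, ← hfin]
      refine Finset.sum_congr rfl fun i _ => (hterm i).symm
  · -- upper bound
    rintro x ⟨k, E, hEpsd, hEsum, rfl⟩
    have hterm : ∀ i, ((B * E i).trace.re) ^ 2 / ((D * E i).trace.re)
        ≤ (C * D * C * E i).trace.re := by
      intro i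
      have hBre : (B * E i).trace.re = (D * C * E i).trace.re := by
        rw [← hC, Matrix.smul_mul, Matrix.trace_smul, Matrix.add_mul, Matrix.trace_add]
        have hconj : (C * D * E i).trace = star ((D * C * E i).trace) :=
          aux_conj_trace hChe hDh (hEpsd i).1
        rw [hconj, smul_eq_mul, Complex.star_def, Complex.add_conj]
        set z := (D * C * E i).trace
        simp [Complex.mul_re]
      rw [hBre]
      have hCDC : (C * D * C).PosSemidef := by
        have h := hD.posSemidef.conjTranspose_mul_mul_same C
        rwa [hChe] at h
      have hCDCE : 0 ≤ (C * D * C * E i).trace.re :=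
        aux_re_nonneg (aux_trace_mul_psd_nonneg hCDC (hEpsd i))
      exact aux_div _ _ _ hCDCE (aux_key D C (E i) hD hChe (hEpsd i))
    calc ∑ i, ((B * E i).trace.re) ^ 2 / ((D * E i).trace.re)
        ≤ ∑ i, (C * D * C * E i).trace.re := Finset.sum_le_sum fun i _ => hterm i
      _ = ((C * D * C) * (∑ i, E i)).trace.re := by
          rw [Finset.mul_sum, Matrix.trace_sum, Complex.re_sum]
      _ = (C * D * C).trace.re := by rw [hEsum, Matrix.mul_one]
      _ = (B * C).trace.re := by rw [cyc, ← part2]
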